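/- For every natural number k ≥ 2, ∑_{r'=0}^{k−1} ∑_{i=0}^{r'} (k−1)^i / i! ≤ e^{k−1} − (k−1)^k / k! − (k−1)^{k+1} / (k+1)! + (k−1)^k / (k−1)!, where e is Euler's number and all arithmetic is over the real numbers. -/

import Mathlib

lemma double_sum_swap (x : ℝ) (n : ℕ) :
    ∑ r' ∈ Finset.range n, ∑ i ∈ Finset.range (r' + 1), x ^ i / (Nat.factorial i)
      = ∑ i ∈ Finset.range n, ((n : ℝ) - i) * x ^ i / (Nat.factorial i) := by
  induction n with
  | zero => simp
  | succ n ih =>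
    rw [Finset.sum_range_succ, ih]
    have h : ∀ i ∈ Finset.range (n + 1),
        (((n : ℕ) + 1 : ℝ) - i) * x ^ i / (Nat.factorial i)
          = ((n : ℝ) - i) * x ^ i / (Nat.factorial i) + x ^ i / (Nat.factorial i) := by
      intro i _
      ring
    have hcast : ∀ i ∈ Finset.range (n + 1),
        (((n + 1 : ℕ) : ℝ) - i) * x ^ i / (Nat.factorial i)
          = ((n : ℝ) - i) * x ^ i / (Nat.factorial i) + x ^ i / (Nat.factorial i) := by
      intro i hi; push_cast; ring
    rw [Finset.sum_congr rfl hcast, Finset.sum_add_distrib, Finset.sum_range_succ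
      (fun i => ((n : ℝ) - i) * x ^ i / (Nat.factorial i))]
    simp

/-- Upper bound on the double sum via truncation of the exponential series. -/
theorem double_sum_le_exp (k : ℕ) (hk : 2 ≤ k) :
    ∑ r' ∈ Finset.range k, ∑ i ∈ Finset.range (r' + 1),
        ((k : ℝ) - 1) ^ i / (Nat.factorial i) ≤
      Real.exp ((k : ℝ) - 1) - ((k : ℝ) - 1) ^ k / (Nat.factorial k)
        - ((k : ℝ) - 1) ^ (k + 1) / (Nat.factorial (k + 1))
        + ((k : ℝ) - 1) ^ k / (Nat.factorial (k - 1)) := by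
  set x : ℝ := (k : ℝ) - 1 with hxdef
  have hk1 : (1 : ℝ) ≤ x := by
    have : (2 : ℝ) ≤ (k : ℝ) := by exact_mod_cast hk
    simp [hxdef]; linarith
  have hx : 0 ≤ x := le_trans zero_le_one hk1
  -- telescoping function
  set f : ℕ → ℝ := fun i => (i : ℝ) * x ^ i / (Nat.factorial i) with hf
  have hterm : ∀ i ∈ Finset.range k,
      ((k : ℝ) - i) * x ^ i / (Nat.factorial i)
        = x ^ i / (Nat.factorial i) + (f (i + 1) - f i) := by
    intro i _
    have hfac : ((Nat.factorial i : ℝ)) ≠ 0 := by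
      exact_mod_cast (Nat.factorial_pos i).ne'
    simp only [hf, Nat.factorial_succ, hxdef]
    push_cast
    field_simp
    ring
  have htel : ∑ i ∈ Finset.range k, (f (i + 1) - f i) = f k - f 0 :=
    Finset.sum_range_sub f k
  have hswap := double_sum_swap x k
  have hLHS : ∑ r' ∈ Finset.range k, ∑ i ∈ Finset.range (r' + 1), x ^ i / (Nat.factorial i)
      = (∑ i ∈ Finset.range k, x ^ i / (Nat.factorial i)) + f k := by
    rw [hswap, Finset.sum_congr rfl hterm, Finset.sum_add_distrib, htel]
    simp [hf]
  have hfk : f k = x ^ k / (Nat.factorial (k - 1)) := by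
    have hk0 : 0 < k := by omega
    have hfac : k * Nat.factorial (k - 1) = Nat.factorial k := Nat.mul_factorial_pred hk0.ne'
    have hfacR : (k : ℝ) * (Nat.factorial (k - 1) : ℝ) = (Nat.factorial k : ℝ) := by
      exact_mod_cast congrArg (Nat.cast : ℕ → ℝ) hfac
    have h1 : ((Nat.factorial (k - 1) : ℝ)) ≠ 0 := by
      exact_mod_cast (Nat.factorial_pos _).ne'
    have h2 : ((Nat.factorial k : ℝ)) ≠ 0 := by
      exact_mod_cast (Nat.factorial_pos _).ne'
    simp only [hf]
    rw [← hfacR]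
    field_simp
  have hexp : ∑ i ∈ Finset.range (k + 2), x ^ i / (Nat.factorial i) ≤ Real.exp x :=
    Real.sum_le_exp_of_nonneg hx (k + 2)
  rw [Finset.sum_range_succ, Finset.sum_range_succ] at hexp
  rw [hLHS, hfk]
  linarith
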